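/- For all ξ₁, η₁, ξ₂, η₂ ∈ C_c²((0,∞)): ∫₀^∞ ∫_ℝ (ξ₁ *₊ η₁)(b,a) · conj((ξ₂ *₋ η₂)(b,a)) db a⁻² da = 0 (and the integrand is integrable, so the integral is well defined). That is, coefficient functions of the two inequivalent infinite-dimensional irreducible representations π₊ and π₋ of the ax+b group are orthogonal in L²(G). -/

import Mathlib

open MeasureTheory Set

/-- Coefficient function of the representation `π₊` of the real `ax+b` group:
`(ξ *₊ η)(b,a) = ∫₀^∞ e^{-2πibt} ξ(at) conj(η(t)) t⁻¹ dt`. -/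
noncomputable def coeffP (ξ η : ℝ → ℂ) (b a : ℝ) : ℂ :=
  ∫ t in Ioi (0 : ℝ),
    Complex.exp (-(2 * Real.pi * b * t : ℝ) * Complex.I) * ξ (a * t)
      * starRingEnd ℂ (η t) * (t : ℂ)⁻¹

/-- Coefficient function of the representation `π₋` of the real `ax+b` group:
`(ξ *₋ η)(b,a) = ∫₀^∞ e^{2πibt} ξ(at) conj(η(t)) t⁻¹ dt`. -/
noncomputable def coeffM (ξ η : ℝ → ℂ) (b a : ℝ) : ℂ :=
  ∫ t in Ioi (0 : ℝ),
    Complex.exp ((2 * Real.pi * b * t : ℝ) * Complex.I) * ξ (a * t)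
      * starRingEnd ℂ (η t) * (t : ℂ)⁻¹

/-- `C_c²((0,∞))`: twice continuously differentiable complex-valued functions on `ℝ`
with compact support contained in `(0,∞)`. -/
def CcTwo (f : ℝ → ℂ) : Prop :=
  ContDiff ℝ 2 f ∧ HasCompactSupport f ∧ tsupport f ⊆ Ioi (0 : ℝ)

/-- Left Haar measure `a⁻² db da` of the `ax+b` group, modelled on `ℝ × (0,∞)`
(first coordinate `b`, second coordinate `a`). -/
noncomputable def muG : Measure (ℝ × ℝ) :=
  (((volume : Measure ℝ).prod ((volume : Measure ℝ).restrict (Ioi (0 : ℝ)))).withDensity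
    fun p => ENNReal.ofReal ((p.2 ^ 2)⁻¹))

open Complex
open scoped FourierTransform Real NNReal ENNReal

/-! ### Auxiliary definitions and lemmas -/

noncomputable def psiF (η : ℝ → ℂ) : ℝ → ℂ := fun t => (starRingEnd ℂ) (η t) * (t : ℂ)⁻¹

noncomputable def Ff (ξ η : ℝ → ℂ) (a : ℝ) : ℝ → ℂ :=
  fun t => ξ (a * t) * (starRingEnd ℂ) (η t) * (t : ℂ)⁻¹

lemma Ff_eq (ξ η : ℝ → ℂ) (a : ℝ) : Ff ξ η a = fun t => ξ (a * t) * psiF η t := by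
  funext t; simp [Ff, psiF, mul_assoc]

lemma psiF_eq_zero {η : ℝ → ℂ} {t : ℝ} (ht : t ∉ tsupport η) : psiF η t = 0 := by
  simp [psiF, image_eq_zero_of_notMem_tsupport ht]

lemma support_psiF (η : ℝ → ℂ) : Function.support (psiF η) ⊆ Function.support η := by
  intro t ht
  simp only [Function.mem_support] at ht ⊢
  intro h; exact ht (by simp [psiF, h])

lemma hasCompactSupport_psiF {η : ℝ → ℂ} (hη : HasCompactSupport η) :
    HasCompactSupport (psiF η) := hη.mono (support_psiF η)

lemma contDiff_psiF {η : ℝ → ℂ} (hη : ContDiff ℝ 2 η) (hs : tsupport η ⊆ Ioi (0:ℝ)) :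
    ContDiff ℝ 2 (psiF η) := by
  rw [contDiff_iff_contDiffAt]
  intro t
  by_cases ht : t ∈ tsupport η
  · have ht0 : (0:ℝ) < t := hs ht
    have h2 : ContDiffAt ℝ 2 (fun s : ℝ => (starRingEnd ℂ) (η s)) t := by
      exact (Complex.conjLIE.contDiff.comp hη).contDiffAt
    have h3 : ContDiffAt ℝ 2 (fun s : ℝ => ((s : ℂ))⁻¹) t := by
      apply ContDiffAt.inv
      · exact Complex.ofRealCLM.contDiff.contDiffAt
      · exact_mod_cast ht0.ne'
    exact h2.mul h3
  · have hev : psiF η =ᶠ[nhds t] 0 := by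
      filter_upwards [(isClosed_tsupport η).isOpen_compl.mem_nhds ht] with s hs'
      exact psiF_eq_zero hs'
    exact (contDiffAt_const (c := (0:ℂ))).congr_of_eventuallyEq hev

lemma contDiff_Ff {ξ η : ℝ → ℂ} (hξ : ContDiff ℝ 2 ξ) (hη : ContDiff ℝ 2 η)
    (hs : tsupport η ⊆ Ioi (0:ℝ)) (a : ℝ) : ContDiff ℝ 2 (Ff ξ η a) := by
  rw [Ff_eq]
  exact (hξ.comp (contDiff_const.mul contDiff_id)).mul (contDiff_psiF hη hs)

lemma hasCompactSupport_Ff {η : ℝ → ℂ} (hη : HasCompactSupport η) (ξ : ℝ → ℂ) (a : ℝ) :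
    HasCompactSupport (Ff ξ η a) := by
  rw [Ff_eq]
  exact (hasCompactSupport_psiF hη).mul_left

lemma Ff_zero_of_nonpos {η : ℝ → ℂ} (hs : tsupport η ⊆ Ioi (0:ℝ)) (ξ : ℝ → ℂ) (a : ℝ)
    {t : ℝ} (ht : t ≤ 0) : Ff ξ η a t = 0 := by
  rw [Ff_eq]
  have : t ∉ tsupport η := fun h => absurd (hs h) (not_lt.2 ht)
  simp [psiF_eq_zero this]

lemma fourier_eq_exp (f : ℝ → ℂ) (w : ℝ) :
    𝓕 f w = ∫ v : ℝ, Complex.exp ((↑(-2 * π * (v * w)) * Complex.I)) • f v := by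
  rw [Real.fourier_eq']
  congr 1; funext v; rw [show inner ℝ v w = v * w by simp [mul_comm]]

lemma coeffP_eq_fourier {η : ℝ → ℂ} (hη : tsupport η ⊆ Ioi (0:ℝ)) (ξ : ℝ → ℂ) (b a : ℝ) :
    coeffP ξ η b a = 𝓕 (Ff ξ η a) b := by
  have h0 : ∀ t ∉ Ioi (0:ℝ),
      Complex.exp (-(2 * Real.pi * b * t : ℝ) * Complex.I) * ξ (a * t)
        * starRingEnd ℂ (η t) * (t : ℂ)⁻¹ = 0 := by
    intro t ht
    have : η t = 0 := image_eq_zero_of_notMem_tsupport (fun hc => ht (hη hc))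
    simp [this]
  rw [coeffP, MeasureTheory.setIntegral_eq_integral_of_forall_compl_eq_zero h0,
    fourier_eq_exp]
  congr 1
  funext t
  have hc : ((-2 * π * (t * b) : ℝ) : ℂ) = -((2 * Real.pi * b * t : ℝ) : ℂ) := by
    push_cast; ring
  rw [smul_eq_mul, hc, Ff]
  push_cast
  ring

lemma conj_coeffM (ξ η : ℝ → ℂ) (b a : ℝ) :
    (starRingEnd ℂ) (coeffM ξ η b a)
      = coeffP (fun t => (starRingEnd ℂ) (ξ t)) (fun t => (starRingEnd ℂ) (η t)) b a := by
  rw [coeffM, coeffP, ← integral_conj]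
  congr 1
  funext t
  simp only [map_mul, map_inv₀, Complex.conj_ofReal, ← Complex.exp_conj, Complex.conj_I,
    RingHomCompTriple.comp_apply, Complex.ofReal_neg]
  ring_nf

lemma CcTwo_star {f : ℝ → ℂ} (hf : CcTwo f) : CcTwo fun t => (starRingEnd ℂ) (f t) := by
  obtain ⟨h2, hs, h0⟩ := hf
  refine ⟨Complex.conjLIE.contDiff.comp h2, ?_, ?_⟩
  · exact hs.comp_left (map_zero _)
  · have hsub : Function.support (fun t => (starRingEnd ℂ) (f t)) ⊆ Function.support f := by
      intro t ht hc; exact ht (by simp [hc])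
    exact (closure_mono hsub).trans h0

lemma contDiff_deriv_of_two {f : ℝ → ℂ} (hf : ContDiff ℝ 2 f) : ContDiff ℝ 1 (deriv f) := by
  have h2 : (2 : WithTop ℕ∞) = 1 + 1 := by norm_num
  rw [h2] at hf
  exact (contDiff_succ_iff_deriv.mp hf).2.2

lemma fourier_decay {f : ℝ → ℂ} (hf : ContDiff ℝ 2 f) (hs : HasCompactSupport f) (b : ℝ) :
    ‖𝓕 f b‖ * (1 + b ^ 2)
      ≤ (∫ t, ‖f t‖) + (∫ t, ‖deriv (deriv f) t‖) / (4 * Real.pi ^ 2) := by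
  have hd1 : ContDiff ℝ 1 (deriv f) := contDiff_deriv_of_two hf
  have intf : Integrable f := hf.continuous.integrable_of_hasCompactSupport hs
  have intf1 : Integrable (deriv f) :=
    hd1.continuous.integrable_of_hasCompactSupport hs.deriv
  have intf2 : Integrable (deriv (deriv f)) :=
    (hd1.continuous_deriv le_rfl).integrable_of_hasCompactSupport hs.deriv.deriv
  have E1 := Real.fourier_deriv intf (hf.differentiable two_ne_zero) intf1
  have E2 := Real.fourier_deriv intf1 (hd1.differentiable one_ne_zero) intf2
  have key : 4 * Real.pi ^ 2 * b ^ 2 * ‖𝓕 f b‖ ≤ ∫ t, ‖deriv (deriv f) t‖ := by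
    have h1 : ‖𝓕 (deriv (deriv f)) b‖ ≤ ∫ t, ‖deriv (deriv f) t‖ :=
      VectorFourier.norm_fourierIntegral_le_integral_norm _ _ _ _ _
    have h2 : ‖𝓕 (deriv (deriv f)) b‖ = 4 * Real.pi ^ 2 * b ^ 2 * ‖𝓕 f b‖ := by
      rw [E2]
      simp only [E1]
      rw [smul_eq_mul, smul_eq_mul]
      rw [show (2 * ↑π * I * ↑b) * ((2 * ↑π * I * ↑b) * 𝓕 f b)
          = ((2 * ↑π * I * ↑b) ^ 2) * 𝓕 f b by ring]
      rw [norm_mul]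
      congr 1
      rw [show (2 * (π:ℂ) * I * (b:ℂ)) ^ 2 = -(((2*π*b)^2 : ℝ) : ℂ) by
        push_cast; ring_nf; rw [Complex.I_sq]; ring]
      rw [norm_neg, Complex.norm_real, Real.norm_eq_abs, _root_.abs_of_nonneg (by positivity)]
      ring
    rw [← h2]; exact h1
  have hb1 : ‖𝓕 f b‖ ≤ ∫ t, ‖f t‖ :=
    VectorFourier.norm_fourierIntegral_le_integral_norm _ _ _ _ _
  have h4 : (0:ℝ) < 4 * Real.pi ^ 2 := by positivity
  have hsq : ‖𝓕 f b‖ * b ^ 2 ≤ (∫ t, ‖deriv (deriv f) t‖) / (4 * Real.pi ^ 2) := by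
    rw [le_div_iff₀ h4]
    nlinarith [key]
  nlinarith [hb1, hsq]

lemma fourier_integrable {f : ℝ → ℂ} (hf : ContDiff ℝ 2 f) (hs : HasCompactSupport f) :
    Integrable (𝓕 f) := by
  have intf : Integrable f := hf.continuous.integrable_of_hasCompactSupport hs
  set C : ℝ := (∫ t, ‖f t‖) + (∫ t, ‖deriv (deriv f) t‖) / (4 * Real.pi ^ 2) with hC
  have hcont : Continuous (𝓕 f) :=
    VectorFourier.fourierIntegral_continuous Real.continuous_fourierChar
      (by exact continuous_inner) intf
  refine Integrable.mono' ((integrable_inv_one_add_sq).const_mul C)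
    hcont.aestronglyMeasurable ?_
  filter_upwards with b
  have h1 : (0:ℝ) < 1 + b ^ 2 := by positivity
  have := fourier_decay hf hs b
  rw [show C * (1 + b^2)⁻¹ = C / (1 + b^2) by ring, le_div_iff₀ h1]
  exact this

lemma key_zero {f g : ℝ → ℂ} (hf : ContDiff ℝ 2 f) (hfs : HasCompactSupport f)
    (hg : ContDiff ℝ 2 g) (hgs : HasCompactSupport g)
    (hf0 : ∀ t ≤ (0:ℝ), f t = 0) (hg0 : ∀ t ≤ (0:ℝ), g t = 0) :
    ∫ b, 𝓕 f b * 𝓕 g b = 0 := by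
  have hfi : Integrable f := hf.continuous.integrable_of_hasCompactSupport hfs
  have hgi : Integrable g := hg.continuous.integrable_of_hasCompactSupport hgs
  have hGi : Integrable (𝓕 g) := fourier_integrable hg hgs
  have flip_eq : (innerₗ ℝ).flip = innerₗ ℝ := by
    apply LinearMap.ext; intro x; apply LinearMap.ext; intro y
    exact real_inner_comm x y
  have h := VectorFourier.integral_fourierIntegral_smul_eq_flip (L := innerₗ ℝ)
      Real.continuous_fourierChar (by exact continuous_inner) hfi hGi
  rw [flip_eq] at h
  have h2 : ∀ x : ℝ, 𝓕 (𝓕 g) x = g (-x) := by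
    intro x
    have hinv := Continuous.fourierInv_fourier_eq hg.continuous hgi hGi
    calc 𝓕 (𝓕 g) x = 𝓕⁻ (𝓕 g) (-x) := by
          rw [Real.fourierInv_eq_fourier_neg, neg_neg]
      _ = g (-x) := by rw [hinv]
  simp only [smul_eq_mul] at h
  calc ∫ b, 𝓕 f b * 𝓕 g b = ∫ x, f x * 𝓕 (𝓕 g) x := h
    _ = ∫ x : ℝ, (0:ℂ) := by
        congr 1; funext x
        rcases le_or_gt x 0 with hx | hx
        · rw [hf0 x hx, zero_mul]
        · rw [h2 x, hg0 (-x) (by linarith), mul_zero]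
    _ = 0 := integral_zero _ _

/-! ### Derivative formulas -/

lemma hasDerivAt_comp_mul {χ : ℝ → ℂ} (hχ : Differentiable ℝ χ) (a t : ℝ) :
    HasDerivAt (fun s => χ (a * s)) (a • deriv χ (a * t)) t := by
  have h := (hχ (a * t)).hasDerivAt
  have h2 : HasDerivAt (fun s : ℝ => a * s) a t := by
    simpa using (hasDerivAt_id t).const_mul a
  exact HasDerivAt.scomp t h h2

lemma hasDerivAt_prodc {χ ψ : ℝ → ℂ} (hχ : Differentiable ℝ χ) (hψ : Differentiable ℝ ψ)
    (a t : ℝ) :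
    HasDerivAt (fun s => χ (a * s) * ψ s)
      (a • deriv χ (a * t) * ψ t + χ (a * t) * deriv ψ t) t :=
  (hasDerivAt_comp_mul hχ a t).mul (hψ t).hasDerivAt

lemma deriv_prodc {χ ψ : ℝ → ℂ} (hχ : Differentiable ℝ χ) (hψ : Differentiable ℝ ψ) (a : ℝ) :
    deriv (fun s => χ (a * s) * ψ s)
      = fun t => a • deriv χ (a * t) * ψ t + χ (a * t) * deriv ψ t :=
  funext fun t => (hasDerivAt_prodc hχ hψ a t).deriv

lemma deriv2_prodc {χ ψ : ℝ → ℂ} (hχ : ContDiff ℝ 2 χ) (hψ : ContDiff ℝ 2 ψ) (a t : ℝ) :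
    deriv (deriv (fun s => χ (a * s) * ψ s)) t
      = a • (a • deriv (deriv χ) (a * t) * ψ t + deriv χ (a * t) * deriv ψ t)
        + (a • deriv χ (a * t) * deriv ψ t + χ (a * t) * deriv (deriv ψ) t) := by
  have hχd : Differentiable ℝ χ := hχ.differentiable two_ne_zero
  have hψd : Differentiable ℝ ψ := hψ.differentiable two_ne_zero
  have hχd1 : Differentiable ℝ (deriv χ) := (contDiff_deriv_of_two hχ).differentiable one_ne_zero
  have hψd1 : Differentiable ℝ (deriv ψ) := (contDiff_deriv_of_two hψ).differentiable one_ne_zero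
  rw [deriv_prodc hχd hψd a]
  have h1 : HasDerivAt (fun s => a • (deriv χ (a * s) * ψ s))
      (a • (a • deriv (deriv χ) (a * t) * ψ t + deriv χ (a * t) * deriv ψ t)) t :=
    (hasDerivAt_prodc hχd1 hψd a t).const_smul a
  have h1' : HasDerivAt (fun s => a • deriv χ (a * s) * ψ s)
      (a • (a • deriv (deriv χ) (a * t) * ψ t + deriv χ (a * t) * deriv ψ t)) t := by
    simpa only [smul_mul_assoc] using h1
  have h2 : HasDerivAt (fun s => χ (a * s) * deriv ψ s)
      (a • deriv χ (a * t) * deriv ψ t + χ (a * t) * deriv (deriv ψ) t) t :=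
    hasDerivAt_prodc hχd hψd1 a t
  exact (h1'.add h2).deriv

/-! ### Bounds -/

lemma exists_norm_bound {f : ℝ → ℂ} (hc : Continuous f) (hs : HasCompactSupport f) :
    ∃ C, 0 ≤ C ∧ ∀ x, ‖f x‖ ≤ C := by
  obtain ⟨C, hC⟩ := hc.bounded_above_of_compact_support hs
  exact ⟨C, le_trans (norm_nonneg (f 0)) (hC 0), hC⟩

lemma exists_Icc_tsupport {f : ℝ → ℂ} (hs : HasCompactSupport f)
    (h0 : tsupport f ⊆ Ioi (0:ℝ)) :
    ∃ ε M : ℝ, 0 < ε ∧ ε ≤ M ∧ tsupport f ⊆ Icc ε M := by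
  set K : Set ℝ := tsupport f ∪ {1} with hK
  have hKc : IsCompact K := hs.union isCompact_singleton
  have hKn : K.Nonempty := ⟨1, Or.inr rfl⟩
  have hKpos : K ⊆ Ioi 0 := union_subset h0 (by intro x hx; simp at hx; simp [hx])
  refine ⟨sInf K, sSup K, hKpos (hKc.sInf_mem hKn), ?_, ?_⟩
  · exact csInf_le_csSup hKn hKc.bddBelow hKc.bddAbove
  · intro t ht
    exact ⟨csInf_le hKc.bddBelow (Or.inl ht), le_csSup hKc.bddAbove (Or.inl ht)⟩

lemma Ff_vanish {ξ η : ℝ → ℂ} {εξ Mξ εη Mη : ℝ} (hεξ : 0 < εξ) (hεη : 0 < εη)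
    (hξ : tsupport ξ ⊆ Icc εξ Mξ) (hη : tsupport η ⊆ Icc εη Mη)
    {a : ℝ} (ha : a ∉ Icc (εξ / Mη) (Mξ / εη)) : Ff ξ η a = 0 := by
  funext t
  by_contra hne
  have hξne : ξ (a * t) ≠ 0 := fun h => hne (by simp [Ff, h])
  have hηne : η t ≠ 0 := fun h => hne (by simp [Ff, h])
  have htmem : t ∈ Icc εη Mη := hη (subset_tsupport η hηne)
  have hatmem : a * t ∈ Icc εξ Mξ := hξ (subset_tsupport ξ hξne)
  have ht0 : 0 < t := lt_of_lt_of_le hεη htmem.1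
  have hMη0 : 0 < Mη := lt_of_lt_of_le ht0 htmem.2
  have ha0 : 0 < a := by nlinarith [hatmem.1]
  apply ha
  constructor
  · rw [div_le_iff₀ (by positivity)]
    nlinarith [hatmem.1, htmem.2]
  · rw [le_div_iff₀ (by positivity)]
    nlinarith [hatmem.2, htmem.1]

lemma continuous_fourier_Ff {ξ η : ℝ → ℂ} (hξc : Continuous ξ) {Bξ : ℝ}
    (hξb : ∀ x, ‖ξ x‖ ≤ Bξ)
    (hη2 : ContDiff ℝ 2 η) (hηs : HasCompactSupport η) (hη0 : tsupport η ⊆ Ioi (0:ℝ)) :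
    Continuous fun p : ℝ × ℝ => 𝓕 (Ff ξ η p.2) p.1 := by
  have hψc : Continuous (psiF η) := (contDiff_psiF hη2 hη0).continuous
  have hψi : Integrable (psiF η) :=
    hψc.integrable_of_hasCompactSupport (hasCompactSupport_psiF hηs)
  have heq : (fun p : ℝ × ℝ => 𝓕 (Ff ξ η p.2) p.1)
      = fun p : ℝ × ℝ => ∫ t : ℝ,
          Complex.exp ((↑(-2 * π * (t * p.1)) * Complex.I)) • Ff ξ η p.2 t := by
    funext p; exact fourier_eq_exp _ _
  rw [heq]
  apply MeasureTheory.continuous_of_dominated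
    (bound := fun t => Bξ * ‖psiF η t‖)
  · intro p
    apply Continuous.aestronglyMeasurable
    apply Continuous.fun_smul
    · exact Complex.continuous_exp.comp
        ((Complex.continuous_ofReal.comp (by continuity)).mul continuous_const)
    · rw [Ff_eq]
      exact (hξc.comp (continuous_const.mul continuous_id)).mul hψc
  · intro p
    filter_upwards with t
    rw [norm_smul, Ff_eq]
    have h1 : ‖Complex.exp ((↑(-2 * π * (t * p.1)) * Complex.I))‖ = 1 :=
      Complex.norm_exp_ofReal_mul_I _
    rw [h1, one_mul]
    calc ‖ξ (p.2 * t) * psiF η t‖ = ‖ξ (p.2 * t)‖ * ‖psiF η t‖ := norm_mul _ _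
      _ ≤ Bξ * ‖psiF η t‖ := by
          apply mul_le_mul_of_nonneg_right (hξb _) (norm_nonneg _)
  · exact hψi.norm.const_mul Bξ
  · filter_upwards with t
    rw [show (fun p : ℝ × ℝ => Complex.exp ((↑(-2 * π * (t * p.1)) * Complex.I)) • Ff ξ η p.2 t)
        = fun p : ℝ × ℝ => Complex.exp ((↑(-2 * π * (t * p.1)) * Complex.I))
            * (ξ (p.2 * t) * psiF η t) by
      funext p; rw [Ff_eq, smul_eq_mul]]
    apply Continuous.mul
    · exact Complex.continuous_exp.comp
        ((Complex.continuous_ofReal.comp (by continuity)).mul continuous_const)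
    · exact ((hξc.comp (by continuity)).mul continuous_const)

lemma integral_norm_Ff_le {ξ η : ℝ → ℂ} (hξ : ContDiff ℝ 2 ξ) (hξs : HasCompactSupport ξ)
    (hη2 : ContDiff ℝ 2 η) (hηs : HasCompactSupport η) (hη0 : tsupport η ⊆ Ioi (0:ℝ))
    {Bξ : ℝ} (hBξ : ∀ x, ‖ξ x‖ ≤ Bξ) (a : ℝ) :
    ∫ t, ‖Ff ξ η a t‖ ≤ Bξ * ∫ t, ‖psiF η t‖ := by
  have hψc : Continuous (psiF η) := (contDiff_psiF hη2 hη0).continuous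
  have hψi : Integrable (psiF η) :=
    hψc.integrable_of_hasCompactSupport (hasCompactSupport_psiF hηs)
  have hfi : Integrable (Ff ξ η a) :=
    (contDiff_Ff hξ hη2 hη0 a).continuous.integrable_of_hasCompactSupport
      (hasCompactSupport_Ff hηs ξ a)
  rw [← integral_const_mul]
  apply integral_mono hfi.norm (hψi.norm.const_mul Bξ)
  intro t
  rw [Ff_eq]
  calc ‖ξ (a * t) * psiF η t‖ = ‖ξ (a * t)‖ * ‖psiF η t‖ := norm_mul _ _
    _ ≤ Bξ * ‖psiF η t‖ := mul_le_mul_of_nonneg_right (hBξ _) (norm_nonneg _)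

lemma fourier_Ff_le {ξ η : ℝ → ℂ} (hξ : ContDiff ℝ 2 ξ) (hξs : HasCompactSupport ξ)
    (hη2 : ContDiff ℝ 2 η) (hηs : HasCompactSupport η) (hη0 : tsupport η ⊆ Ioi (0:ℝ))
    {Bξ : ℝ} (hBξ : ∀ x, ‖ξ x‖ ≤ Bξ) (a b : ℝ) :
    ‖𝓕 (Ff ξ η a) b‖ ≤ Bξ * ∫ t, ‖psiF η t‖ :=
  le_trans (VectorFourier.norm_fourierIntegral_le_integral_norm _ _ _ _ _)
    (integral_norm_Ff_le hξ hξs hη2 hηs hη0 hBξ a)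

lemma uniform_decay {ξ η : ℝ → ℂ} (hξ : ContDiff ℝ 2 ξ) (hξs : HasCompactSupport ξ)
    (hη2 : ContDiff ℝ 2 η) (hηs : HasCompactSupport η) (hη0 : tsupport η ⊆ Ioi (0:ℝ))
    {β : ℝ} (hβ : 0 ≤ β) :
    ∃ C : ℝ, ∀ a : ℝ, |a| ≤ β → ∀ b : ℝ,
      ‖𝓕 (Ff ξ η a) b‖ * (1 + b ^ 2) ≤ C := by
  obtain ⟨B0, hB00, hB0⟩ := exists_norm_bound hξ.continuous hξs
  obtain ⟨B1, hB10, hB1⟩ :=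
    exists_norm_bound (contDiff_deriv_of_two hξ).continuous hξs.deriv
  obtain ⟨B2, hB20, hB2⟩ :=
    exists_norm_bound ((contDiff_deriv_of_two hξ).continuous_deriv le_rfl) hξs.deriv.deriv
  have hψ2 : ContDiff ℝ 2 (psiF η) := contDiff_psiF hη2 hη0
  have hψs : HasCompactSupport (psiF η) := hasCompactSupport_psiF hηs
  have hψi : Integrable (psiF η) := hψ2.continuous.integrable_of_hasCompactSupport hψs
  have hψi1 : Integrable (deriv (psiF η)) :=
    (contDiff_deriv_of_two hψ2).continuous.integrable_of_hasCompactSupport hψs.deriv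
  have hψi2 : Integrable (deriv (deriv (psiF η))) :=
    ((contDiff_deriv_of_two hψ2).continuous_deriv le_rfl).integrable_of_hasCompactSupport
      hψs.deriv.deriv
  set Iψ0 : ℝ := ∫ t, ‖psiF η t‖ with hIψ0
  set Iψ1 : ℝ := ∫ t, ‖deriv (psiF η) t‖ with hIψ1
  set Iψ2 : ℝ := ∫ t, ‖deriv (deriv (psiF η)) t‖ with hIψ2
  set J : ℝ := β ^ 2 * B2 * Iψ0 + 2 * β * B1 * Iψ1 + B0 * Iψ2 with hJ
  refine ⟨B0 * Iψ0 + J / (4 * Real.pi ^ 2), ?_⟩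
  intro a ha b
  have ha0 : 0 ≤ |a| := abs_nonneg a
  have hfa2 : ContDiff ℝ 2 (Ff ξ η a) := contDiff_Ff hξ hη2 hη0 a
  have hfas : HasCompactSupport (Ff ξ η a) := hasCompactSupport_Ff hηs ξ a
  have hfa2i : Integrable (deriv (deriv (Ff ξ η a))) :=
    ((contDiff_deriv_of_two hfa2).continuous_deriv le_rfl).integrable_of_hasCompactSupport
      hfas.deriv.deriv
  have hptw : ∀ t, ‖deriv (deriv (Ff ξ η a)) t‖
      ≤ β ^ 2 * B2 * ‖psiF η t‖ + 2 * β * B1 * ‖deriv (psiF η) t‖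
        + B0 * ‖deriv (deriv (psiF η)) t‖ := by
    intro t
    have hd2 : deriv (deriv (Ff ξ η a)) t
        = a • (a • deriv (deriv ξ) (a * t) * psiF η t + deriv ξ (a * t) * deriv (psiF η) t)
          + (a • deriv ξ (a * t) * deriv (psiF η) t
            + ξ (a * t) * deriv (deriv (psiF η)) t) := by
      rw [Ff_eq]; exact deriv2_prodc hξ hψ2 a t
    rw [hd2]
    have e1 : ‖a • deriv (deriv ξ) (a * t) * psiF η t‖
        ≤ |a| * B2 * ‖psiF η t‖ := by
      rw [smul_mul_assoc, norm_smul, norm_mul, Real.norm_eq_abs, mul_assoc]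
      gcongr
      exact hB2 _
    have e2 : ‖deriv ξ (a * t) * deriv (psiF η) t‖ ≤ B1 * ‖deriv (psiF η) t‖ := by
      rw [norm_mul]; gcongr; exact hB1 _
    have e3 : ‖a • deriv ξ (a * t) * deriv (psiF η) t‖
        ≤ |a| * B1 * ‖deriv (psiF η) t‖ := by
      rw [smul_mul_assoc, norm_smul, norm_mul, Real.norm_eq_abs, mul_assoc]
      gcongr
      exact hB1 _
    have e4 : ‖ξ (a * t) * deriv (deriv (psiF η)) t‖
        ≤ B0 * ‖deriv (deriv (psiF η)) t‖ := by
      rw [norm_mul]; gcongr; exact hB0 _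
    calc ‖_ + _‖ ≤ ‖a • (a • deriv (deriv ξ) (a * t) * psiF η t
            + deriv ξ (a * t) * deriv (psiF η) t)‖
          + ‖a • deriv ξ (a * t) * deriv (psiF η) t
            + ξ (a * t) * deriv (deriv (psiF η)) t‖ := norm_add_le _ _
      _ ≤ |a| * (‖a • deriv (deriv ξ) (a * t) * psiF η t‖
            + ‖deriv ξ (a * t) * deriv (psiF η) t‖)
          + (‖a • deriv ξ (a * t) * deriv (psiF η) t‖
            + ‖ξ (a * t) * deriv (deriv (psiF η)) t‖) := by
          refine add_le_add ?_ (norm_add_le _ _)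
          rw [norm_smul, Real.norm_eq_abs]
          exact mul_le_mul_of_nonneg_left (norm_add_le _ _) ha0
      _ ≤ _ := by
          nlinarith [mul_le_mul_of_nonneg_left e1 ha0, mul_le_mul_of_nonneg_left e2 ha0,
            e3, e4,
            mul_le_mul_of_nonneg_right (mul_self_le_mul_self ha0 ha)
              (mul_nonneg hB20 (norm_nonneg (psiF η t))),
            mul_le_mul_of_nonneg_right ha
              (mul_nonneg hB10 (norm_nonneg (deriv (psiF η) t)))]
  have i0 : Integrable (fun t => β ^ 2 * B2 * ‖psiF η t‖) := hψi.norm.const_mul _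
  have i1 : Integrable (fun t => 2 * β * B1 * ‖deriv (psiF η) t‖) := hψi1.norm.const_mul _
  have i2 : Integrable (fun t => B0 * ‖deriv (deriv (psiF η)) t‖) := hψi2.norm.const_mul _
  have i01 : Integrable (fun t => β ^ 2 * B2 * ‖psiF η t‖
      + 2 * β * B1 * ‖deriv (psiF η) t‖) := i0.add i1
  have hbd : Integrable (fun t => β ^ 2 * B2 * ‖psiF η t‖
      + 2 * β * B1 * ‖deriv (psiF η) t‖ + B0 * ‖deriv (deriv (psiF η)) t‖) := i01.add i2
  have hint2 : ∫ t, ‖deriv (deriv (Ff ξ η a)) t‖ ≤ J := by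
    have := integral_mono hfa2i.norm hbd hptw
    rwa [integral_add i01 i2, integral_add i0 i1,
      integral_const_mul, integral_const_mul, integral_const_mul] at this
  have hint0 : ∫ t, ‖Ff ξ η a t‖ ≤ B0 * Iψ0 :=
    integral_norm_Ff_le hξ hξs hη2 hηs hη0 hB0 a
  calc ‖𝓕 (Ff ξ η a) b‖ * (1 + b ^ 2)
      ≤ (∫ t, ‖Ff ξ η a t‖) + (∫ t, ‖deriv (deriv (Ff ξ η a)) t‖) / (4 * Real.pi ^ 2) :=
        fourier_decay hfa2 hfas b
    _ ≤ B0 * Iψ0 + J / (4 * Real.pi ^ 2) := by gcongr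

/-! ### Measure bridge -/

lemma density_meas : Measurable fun p : ℝ × ℝ => ((p.2 ^ 2)⁻¹ : ℝ).toNNReal :=
  ((continuous_snd.pow 2).measurable).inv.real_toNNReal

lemma smul_eq_smul (Φ : ℝ × ℝ → ℂ) :
    (fun p : ℝ × ℝ => (((p.2 ^ 2)⁻¹ : ℝ).toNNReal) • Φ p)
      = fun p => ((p.2 ^ 2)⁻¹ : ℝ) • Φ p := by
  funext p
  rw [NNReal.smul_def, Real.coe_toNNReal _ (by positivity)]

lemma muG_eq : muG = (((volume : Measure ℝ).prod
    ((volume : Measure ℝ).restrict (Ioi (0 : ℝ)))).withDensity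
    fun p => ((((p.2 ^ 2)⁻¹ : ℝ).toNNReal : ℝ≥0) : ℝ≥0∞)) := rfl

lemma muG_integrable_iff (Φ : ℝ × ℝ → ℂ) :
    Integrable Φ muG ↔ Integrable (fun p => ((p.2 ^ 2)⁻¹ : ℝ) • Φ p)
      ((volume : Measure ℝ).prod ((volume : Measure ℝ).restrict (Ioi (0:ℝ)))) := by
  rw [muG_eq, integrable_withDensity_iff_integrable_smul density_meas, smul_eq_smul]

lemma muG_integral_eq (Φ : ℝ × ℝ → ℂ) :
    ∫ p, Φ p ∂muG = ∫ p, ((p.2 ^ 2)⁻¹ : ℝ) • Φ p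
      ∂((volume : Measure ℝ).prod ((volume : Measure ℝ).restrict (Ioi (0:ℝ)))) := by
  rw [muG_eq, integral_withDensity_eq_integral_smul density_meas, smul_eq_smul]

lemma ae_snd_pos : ∀ᵐ p ∂((volume : Measure ℝ).prod
    ((volume : Measure ℝ).restrict (Ioi (0:ℝ)))), p.2 ∈ Ioi (0:ℝ) := by
  rw [ae_iff]
  have h : {p : ℝ × ℝ | ¬ p.2 ∈ Ioi (0:ℝ)} = univ ×ˢ (Iic (0:ℝ)) := by
    ext p; simp [not_lt]
  rw [h, Measure.prod_prod, Measure.restrict_apply measurableSet_Iic]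
  have : Iic (0:ℝ) ∩ Ioi 0 = ∅ := by
    ext x; simp only [mem_inter_iff, mem_Iic, mem_Ioi, mem_empty_iff_false, iff_false]
    rintro ⟨h1, h2⟩; linarith
  rw [this]
  simp

/-- **Orthogonality of coefficient functions of `π₊` and `π₋`**
(Proposition 4.5(c) of Choi–Ghandehari): for `ξᵢ, ηᵢ ∈ C_c²((0,∞))`,
`⟨ξ₁ *₊ η₁, ξ₂ *₋ η₂⟩_{L²(G)} = 0`. -/
theorem orthogonality_plus_minus (ξ₁ η₁ ξ₂ η₂ : ℝ → ℂ)
    (hξ₁ : CcTwo ξ₁) (hη₁ : CcTwo η₁) (hξ₂ : CcTwo ξ₂) (hη₂ : CcTwo η₂) :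
    Integrable (fun p : ℝ × ℝ =>
      coeffP ξ₁ η₁ p.1 p.2 * starRingEnd ℂ (coeffM ξ₂ η₂ p.1 p.2)) muG ∧
    ∫ p, coeffP ξ₁ η₁ p.1 p.2 * starRingEnd ℂ (coeffM ξ₂ η₂ p.1 p.2) ∂muG = 0 := by
  obtain ⟨hξ₁2, hξ₁s, hξ₁0⟩ := hξ₁
  obtain ⟨hη₁2, hη₁s, hη₁0⟩ := hη₁
  have hξ₂' : CcTwo fun t => (starRingEnd ℂ) (ξ₂ t) := CcTwo_star hξ₂
  have hη₂' : CcTwo fun t => (starRingEnd ℂ) (η₂ t) := CcTwo_star hη₂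
  obtain ⟨hξ₂2, hξ₂s, hξ₂0⟩ := hξ₂'
  obtain ⟨hη₂2, hη₂s, hη₂0⟩ := hη₂'
  set ξ₂' : ℝ → ℂ := fun t => (starRingEnd ℂ) (ξ₂ t) with hξ₂'def
  set η₂' : ℝ → ℂ := fun t => (starRingEnd ℂ) (η₂ t) with hη₂'def
  -- rewrite the integrand as a product of Fourier transforms
  set Φ : ℝ × ℝ → ℂ := fun p => 𝓕 (Ff ξ₁ η₁ p.2) p.1 * 𝓕 (Ff ξ₂' η₂' p.2) p.1 with hΦdef
  have hint_eq : (fun p : ℝ × ℝ =>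
      coeffP ξ₁ η₁ p.1 p.2 * starRingEnd ℂ (coeffM ξ₂ η₂ p.1 p.2)) = Φ := by
    funext p
    rw [hΦdef, coeffP_eq_fourier hη₁0, conj_coeffM, coeffP_eq_fourier hη₂0]
  -- support bounds in the `a`-variable
  obtain ⟨εξ, Mξ, hεξ, hεMξ, hsubξ⟩ := exists_Icc_tsupport hξ₁s hξ₁0
  obtain ⟨εη, Mη, hεη, hεMη, hsubη⟩ := exists_Icc_tsupport hη₁s hη₁0
  set α : ℝ := εξ / Mη with hαdef
  set β : ℝ := Mξ / εη with hβdef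
  have hMη : (0:ℝ) < Mη := lt_of_lt_of_le hεη hεMη
  have hα : 0 < α := div_pos hεξ hMη
  have hβ0 : 0 < β := div_pos (lt_of_lt_of_le hεξ hεMξ) hεη
  have hvan : ∀ a : ℝ, a ∉ Icc α β → Ff ξ₁ η₁ a = 0 :=
    fun a ha => Ff_vanish hεξ hεη hsubξ hsubη ha
  -- uniform bounds
  obtain ⟨Cf, hCf⟩ := uniform_decay hξ₁2 hξ₁s hη₁2 hη₁s hη₁0 hβ0.le
  obtain ⟨Bξ₂, hBξ₂0, hBξ₂⟩ := exists_norm_bound hξ₂2.continuous hξ₂s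
  set Cg : ℝ := Bξ₂ * ∫ t, ‖psiF η₂' t‖ with hCgdef
  have hCg0 : 0 ≤ Cg :=
    mul_nonneg hBξ₂0 (integral_nonneg fun t => norm_nonneg _)
  have hg_le : ∀ a b : ℝ, ‖𝓕 (Ff ξ₂' η₂' a) b‖ ≤ Cg :=
    fun a b => fourier_Ff_le hξ₂2 hξ₂s hη₂2 hη₂s hη₂0 hBξ₂ a b
  have hCf0 : 0 ≤ Cf := by
    have := hCf 0 (by simpa using hβ0.le) 0
    have h0 : (0:ℝ) ≤ ‖𝓕 (Ff ξ₁ η₁ 0) 0‖ * (1 + (0:ℝ) ^ 2) := by positivity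
    linarith
  -- continuity of Φ
  obtain ⟨Bξ₁, hBξ₁0, hBξ₁⟩ := exists_norm_bound hξ₁2.continuous hξ₁s
  have hΦcont : Continuous Φ :=
    (continuous_fourier_Ff hξ₁2.continuous hBξ₁ hη₁2 hη₁s hη₁0).mul
      (continuous_fourier_Ff hξ₂2.continuous hBξ₂ hη₂2 hη₂s hη₂0)
  -- the dominating function
  set D : ℝ × ℝ → ℝ := fun p => (((α ^ 2)⁻¹ * (Cf * Cg)) * (1 + p.1 ^ 2)⁻¹)
      * ((Icc α β).indicator (fun _ => (1:ℝ)) p.2) with hDdef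
  have hDint : Integrable D
      ((volume : Measure ℝ).prod ((volume : Measure ℝ).restrict (Ioi (0:ℝ)))) := by
    apply Integrable.mul_prod (integrable_inv_one_add_sq.const_mul _)
    rw [integrable_indicator_iff measurableSet_Icc]
    refine (integrableOn_const_iff).2 (Or.inr ?_)
    exact lt_of_le_of_lt (Measure.restrict_apply_le _ _) measure_Icc_lt_top
  -- measurability of the weighted integrand
  have hsm : AEStronglyMeasurable (fun p : ℝ × ℝ => ((p.2 ^ 2)⁻¹ : ℝ) • Φ p)
      ((volume : Measure ℝ).prod ((volume : Measure ℝ).restrict (Ioi (0:ℝ)))) :=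
    (((continuous_snd.pow 2).measurable).inv.aestronglyMeasurable).smul
      hΦcont.aestronglyMeasurable
  -- the pointwise bound
  have hbound : ∀ᵐ p ∂((volume : Measure ℝ).prod
      ((volume : Measure ℝ).restrict (Ioi (0:ℝ)))),
      ‖((p.2 ^ 2)⁻¹ : ℝ) • Φ p‖ ≤ D p := by
    filter_upwards [ae_snd_pos] with p hp
    by_cases hmem : p.2 ∈ Icc α β
    · have ha2 : (0:ℝ) < p.2 := hp
      have habs : |p.2| = p.2 := abs_of_pos ha2
      have hf_le : ‖𝓕 (Ff ξ₁ η₁ p.2) p.1‖ ≤ Cf * (1 + p.1 ^ 2)⁻¹ := by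
        have h1 : (0:ℝ) < 1 + p.1 ^ 2 := by positivity
        rw [show Cf * (1 + p.1 ^ 2)⁻¹ = Cf / (1 + p.1 ^ 2) by ring, le_div_iff₀ h1]
        exact hCf p.2 (by rw [habs]; exact hmem.2) p.1
      have hinv_le : ((p.2 ^ 2)⁻¹ : ℝ) ≤ (α ^ 2)⁻¹ := by
        apply inv_anti₀ (by positivity)
        nlinarith [hmem.1, hα]
      rw [hDdef]
      simp only [indicator_of_mem hmem, mul_one]
      rw [norm_smul, Real.norm_eq_abs, _root_.abs_of_nonneg (by positivity : (0:ℝ) ≤ (p.2^2)⁻¹)]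
      calc (p.2 ^ 2)⁻¹ * ‖Φ p‖ ≤ (α ^ 2)⁻¹ * ‖Φ p‖ :=
            mul_le_mul_of_nonneg_right hinv_le (norm_nonneg _)
        _ ≤ (α ^ 2)⁻¹ * ((Cf * (1 + p.1 ^ 2)⁻¹) * Cg) := by
            apply mul_le_mul_of_nonneg_left _ (by positivity)
            rw [hΦdef, norm_mul]
            exact mul_le_mul hf_le (hg_le p.2 p.1) (norm_nonneg _)
              (mul_nonneg hCf0 (by positivity))
        _ = ((α ^ 2)⁻¹ * (Cf * Cg)) * (1 + p.1 ^ 2)⁻¹ := by ring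
    · have hF0 : 𝓕 (Ff ξ₁ η₁ p.2) p.1 = 0 := by
        rw [hvan p.2 hmem, fourier_eq_exp]
        simp
      rw [hDdef]
      simp [hΦdef, hF0, indicator_of_notMem hmem]
  have hInt : Integrable (fun p : ℝ × ℝ => ((p.2 ^ 2)⁻¹ : ℝ) • Φ p)
      ((volume : Measure ℝ).prod ((volume : Measure ℝ).restrict (Ioi (0:ℝ)))) :=
    Integrable.mono' hDint hsm hbound
  -- inner integral vanishes for every a
  have hzero : ∀ a : ℝ, ∫ b, 𝓕 (Ff ξ₁ η₁ a) b * 𝓕 (Ff ξ₂' η₂' a) b = 0 := by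
    intro a
    exact key_zero (contDiff_Ff hξ₁2 hη₁2 hη₁0 a) (hasCompactSupport_Ff hη₁s ξ₁ a)
      (contDiff_Ff hξ₂2 hη₂2 hη₂0 a) (hasCompactSupport_Ff hη₂s ξ₂' a)
      (fun t ht => Ff_zero_of_nonpos hη₁0 ξ₁ a ht)
      (fun t ht => Ff_zero_of_nonpos hη₂0 ξ₂' a ht)
  constructor
  · rw [hint_eq, muG_integrable_iff]
    exact hInt
  · rw [hint_eq, muG_integral_eq]
    rw [MeasureTheory.integral_prod_symm _ hInt]
    have hinner : ∀ a : ℝ, ∫ b, ((a ^ 2)⁻¹ : ℝ) • Φ (b, a) = 0 := by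
      intro a
      rw [integral_smul]
      rw [show (fun b => Φ (b, a)) = fun b => 𝓕 (Ff ξ₁ η₁ a) b * 𝓕 (Ff ξ₂' η₂' a) b from rfl]
      rw [hzero a, smul_zero]
    simp only [hinner]
    simp
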